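/- Fix η > 0, T > 0 and A ∈ ℝ^{n×m}. For every x ∈ Δ_n and every j ∈ BR(x), the optimal continuous-time reward with zero initial history satisfies R*_cont(0, T) ≥ ln(m)/η + T·x^⊤A e_j − (1/η)·ln( |BR(x)| + Σ_{i ∉ BR(x)} exp( η·T·( x^⊤A e_j − x^⊤A e_i ) ) ). (Note that x^⊤A e_j − x^⊤A e_i < 0 for every i ∉ BR(x).) -/

import Mathlib

open MeasureTheory

/-- Componentwise cumulative play of a continuous-time strategy: `∫_0^t x(s) ds`. -/
noncomputable def cumX {n : ℕ} (x : ℝ → Fin n → ℝ) (t : ℝ) (k : Fin n) : ℝ :=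
  ∫ s in (0:ℝ)..t, x s k

/-- The Replicator Dynamics learner's mixed strategy at time `t`. -/
noncomputable def contPlay {n m : ℕ} (η : ℝ) (A : Matrix (Fin n) (Fin m) ℝ)
    (h0 : Fin m → ℝ) (x : ℝ → Fin n → ℝ) (t : ℝ) (i : Fin m) : ℝ :=
  Real.exp (η * (h0 i - ∑ k, cumX x t k * A k i)) /
    ∑ j, Real.exp (η * (h0 j - ∑ k, cumX x t k * A k j))

/-- The optimizer's continuous-time reward against the Replicator Dynamics. -/
noncomputable def Rcont {n m : ℕ} (η : ℝ) (A : Matrix (Fin n) (Fin m) ℝ)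
    (h0 : Fin m → ℝ) (T : ℝ) (x : ℝ → Fin n → ℝ) : ℝ :=
  ∫ t in (0:ℝ)..T, ∑ k, ∑ i, x t k * A k i * contPlay η A h0 x t i

/-- The optimal continuous-time reward. -/
noncomputable def RcontStar {n m : ℕ} (η : ℝ) (A : Matrix (Fin n) (Fin m) ℝ)
    (h0 : Fin m → ℝ) (T : ℝ) : ℝ :=
  sSup {r | ∃ x : ℝ → Fin n → ℝ, Measurable x ∧
    (∀ t ∈ Set.Icc (0:ℝ) T, x t ∈ stdSimplex ℝ (Fin n)) ∧ r = Rcont η A h0 T x}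

open scoped Classical in
/-- The set of best responses of the learner (with matrix `−A`) to the optimizer's
mixed strategy `x`: the columns minimizing `xᵀ A e_j`. -/
noncomputable def BRset {n m : ℕ} (A : Matrix (Fin n) (Fin m) ℝ) (x : Fin n → ℝ) :
    Finset (Fin m) :=
  Finset.univ.filter fun j => ∀ i, ∑ k, x k * A k j ≤ ∑ k, x k * A k i

set_option maxHeartbeats 1000000

/-- lower bound on `R*_cont(0,T)` from any `x ∈ Δ_n` and any best
response `j ∈ BR(x)`, together with the noted negativity for `i ∉ BR(x)`. -/
theorem stmt3 {n m : ℕ} (hn : 0 < n) (hm : 0 < m) (η T : ℝ) (hη : 0 < η) (hT : 0 < T)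
    (A : Matrix (Fin n) (Fin m) ℝ) (x : Fin n → ℝ) (hx : x ∈ stdSimplex ℝ (Fin n))
    (j : Fin m) (hj : j ∈ BRset A x) :
    (Real.log m / η + T * (∑ k, x k * A k j) -
      (1/η) * Real.log (((BRset A x).card : ℝ) +
        ∑ i ∈ Finset.univ \ BRset A x,
          Real.exp (η * T * ((∑ k, x k * A k j) - (∑ k, x k * A k i))))
      ≤ RcontStar η A (fun _ => 0) T) ∧
    ∀ i, i ∉ BRset A x → (∑ k, x k * A k j) - (∑ k, x k * A k i) < 0 := by
  classical
  set c : Fin m → ℝ := fun i => ∑ k, x k * A k i with hc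
  have hjle : ∀ i, c j ≤ c i := by simpa [BRset, c] using hj
  have hneg : ∀ i, i ∉ BRset A x → c j - c i < 0 := by
    intro i hi
    simp only [BRset, Finset.mem_filter, Finset.mem_univ, true_and, not_forall, not_le] at hi
    obtain ⟨i', hi'⟩ := hi
    have := hjle i'
    simp only [c] at *
    linarith
  refine ⟨?_, hneg⟩
  -- abbreviation for the big logarithm argument
  set Q : ℝ := ((BRset A x).card : ℝ) +
      ∑ i ∈ Finset.univ \ BRset A x, Real.exp (η * T * (c j - c i)) with hQ
  -- the softmax denominator
  set S : ℝ → ℝ := fun t => ∑ i, Real.exp (-(η * t * c i)) with hS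
  have hSpos : ∀ t, 0 < S t := fun t =>
    Finset.sum_pos (fun i _ => Real.exp_pos _) ⟨j, Finset.mem_univ _⟩
  -- the constant strategy
  set X : ℝ → Fin n → ℝ := fun _ => x with hX
  have hcum : ∀ (t : ℝ) (i : Fin m), (∑ k, cumX X t k * A k i) = t * c i := by
    intro t i
    have h1 : ∀ k, cumX X t k = t * x k := by
      intro k
      simp [cumX, X, intervalIntegral.integral_const, smul_eq_mul]
    simp only [h1, hc]
    rw [Finset.mul_sum]; exact Finset.sum_congr rfl (fun k _ => by ring)
  have hplay : ∀ (t : ℝ) (i : Fin m),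
      contPlay η A (fun _ => 0) X t i = Real.exp (-(η * t * c i)) / S t := by
    intro t i
    simp only [contPlay, hcum, hS]
    congr 1
    · congr 1; ring
    · exact Finset.sum_congr rfl fun i' _ => by congr 1; ring
  set f : ℝ → ℝ := fun t => (∑ i, c i * Real.exp (-(η * t * c i))) / S t with hf
  have hinteg : ∀ t : ℝ,
      (∑ k, ∑ i, X t k * A k i * contPlay η A (fun _ => 0) X t i) = f t := by
    intro t
    rw [Finset.sum_comm]
    simp only [hf]
    rw [Finset.sum_div]
    refine Finset.sum_congr rfl fun i _ => ?_
    rw [hplay t i, ← Finset.sum_mul, mul_div_assoc]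
  -- derivative computations
  have hSder : ∀ t : ℝ, HasDerivAt S (∑ i, Real.exp (-(η * t * c i)) * (-(η * c i))) t := by
    intro t
    refine HasDerivAt.fun_sum fun i _ => ?_
    have h1 : HasDerivAt (fun s : ℝ => -(η * s * c i)) (-(η * c i)) t := by
      simpa using (((hasDerivAt_id t).const_mul η).mul_const (c i)).fun_neg
    exact h1.exp
  have hgder : ∀ t : ℝ, HasDerivAt (fun s => -(1/η) * Real.log (S s)) (f t) t := by
    intro t
    have h2 := ((hSder t).log (hSpos t).ne')
    have h3 := h2.const_mul (-(1/η))
    have h4 : (∑ i, Real.exp (-(η * t * c i)) * (-(η * c i)))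
        = (-η) * ∑ i, c i * Real.exp (-(η * t * c i)) := by
      rw [Finset.mul_sum]; exact Finset.sum_congr rfl fun i _ => by ring
    have h5 : f t = -(1/η) * ((∑ i, Real.exp (-(η * t * c i)) * (-(η * c i))) / S t) := by
      rw [hf, h4]
      field_simp
      congr 1; exact Finset.sum_congr rfl fun i _ => by ring_nf
    rw [h5]
    exact h3
  have hScont : Continuous S := by
    refine continuous_finset_sum _ fun i _ => Real.continuous_exp.comp ?_
    fun_prop
  have hfcont : Continuous f := by
    refine Continuous.div ?_ hScont fun t => (hSpos t).ne'
    refine continuous_finset_sum _ fun i _ => Continuous.mul continuous_const ?_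
    exact Real.continuous_exp.comp (by fun_prop)
  have hint : Rcont η A (fun _ => 0) T X
      = (-(1/η) * Real.log (S T)) - (-(1/η) * Real.log (S 0)) := by
    rw [Rcont]
    rw [intervalIntegral.integral_congr (g := f) fun t _ => hinteg t]
    exact intervalIntegral.integral_eq_sub_of_hasDerivAt (fun t _ => hgder t)
      (hfcont.intervalIntegrable 0 T)
  have hS0 : S 0 = m := by simp [hS]
  -- relate S T to Q
  have hBReq : ∀ i ∈ BRset A x, c i = c j := by
    intro i hi
    have h1 : ∀ i', c i ≤ c i' := by simpa [BRset, c] using hi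
    exact le_antisymm (h1 j) (hjle i)
  have hsplit : Q = ∑ i, Real.exp (η * T * (c j - c i)) := by
    rw [hQ, ← Finset.sum_sdiff (Finset.subset_univ (BRset A x)), add_comm]
    congr 1
    rw [Finset.sum_congr rfl (fun i hi => by rw [hBReq i hi, sub_self, mul_zero, Real.exp_zero])]
    simp
  have hQpos : 0 < Q := by
    rw [hsplit]
    exact Finset.sum_pos (fun i _ => Real.exp_pos _) ⟨j, Finset.mem_univ _⟩
  have hST : S T = Real.exp (-(η * T * c j)) * Q := by
    rw [hsplit, hS, Finset.mul_sum]
    exact Finset.sum_congr rfl fun i _ => by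
      rw [← Real.exp_add]; congr 1; ring
  have hlogST : Real.log (S T) = -(η * T * c j) + Real.log Q := by
    rw [hST, Real.log_mul (Real.exp_ne_zero _) hQpos.ne', Real.log_exp]
  -- the value of the constant strategy
  have hval : Rcont η A (fun _ => 0) T X
      = Real.log m / η + T * c j - (1/η) * Real.log Q := by
    rw [hint, hS0, hlogST]
    field_simp
    ring
  -- boundedness of the set of rewards
  set C : ℝ := ∑ k, ∑ i, |A k i| with hC
  have hbdd : BddAbove {r | ∃ x' : ℝ → Fin n → ℝ, Measurable x' ∧
      (∀ t ∈ Set.Icc (0:ℝ) T, x' t ∈ stdSimplex ℝ (Fin n)) ∧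
      r = Rcont η A (fun _ => 0) T x'} := by
    refine ⟨C * T, ?_⟩
    rintro r ⟨x', hmeas, hsimp, rfl⟩
    have hb : ∀ t ∈ Set.uIoc (0:ℝ) T,
        ‖∑ k, ∑ i, x' t k * A k i * contPlay η A (fun _ => 0) x' t i‖ ≤ C := by
      intro t ht
      have htI : t ∈ Set.Icc (0:ℝ) T := by
        rw [Set.uIoc_of_le hT.le] at ht
        exact ⟨ht.1.le, ht.2⟩
      have hxs := hsimp t htI
      have hx1 : ∀ k, |x' t k| ≤ 1 := by
        intro k
        rw [abs_of_nonneg (hxs.1 k)]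
        calc x' t k ≤ ∑ k', x' t k' :=
              Finset.single_le_sum (fun k' _ => hxs.1 k') (Finset.mem_univ k)
          _ = 1 := hxs.2
      have hy1 : ∀ i, |contPlay η A (fun _ => 0) x' t i| ≤ 1 := by
        intro i
        have hden : 0 < ∑ j', Real.exp (η * ((fun _ => (0:ℝ)) j' - ∑ k, cumX x' t k * A k j')) :=
          Finset.sum_pos (fun _ _ => Real.exp_pos _) ⟨i, Finset.mem_univ _⟩
        rw [contPlay, abs_div, abs_of_pos hden, div_le_one hden,
          abs_of_pos (Real.exp_pos _)]
        exact Finset.single_le_sum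
          (f := fun j' => Real.exp (η * ((fun _ => (0:ℝ)) j' - ∑ k, cumX x' t k * A k j')))
          (fun j' _ => (Real.exp_pos _).le) (Finset.mem_univ i)
      rw [Real.norm_eq_abs, hC]
      calc |∑ k, ∑ i, x' t k * A k i * contPlay η A (fun _ => 0) x' t i|
          ≤ ∑ k, |∑ i, x' t k * A k i * contPlay η A (fun _ => 0) x' t i| :=
            Finset.abs_sum_le_sum_abs _ _
        _ ≤ ∑ k, ∑ i, |x' t k * A k i * contPlay η A (fun _ => 0) x' t i| :=
            Finset.sum_le_sum fun k _ => Finset.abs_sum_le_sum_abs _ _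
        _ ≤ ∑ k, ∑ i, |A k i| := by
            refine Finset.sum_le_sum fun k _ => Finset.sum_le_sum fun i _ => ?_
            rw [abs_mul, abs_mul]
            calc |x' t k| * |A k i| * |contPlay η A (fun _ => 0) x' t i|
                ≤ 1 * |A k i| * 1 := by
                  gcongr
                  · exact hx1 k
                  · exact hy1 i
              _ = |A k i| := by ring
    have := intervalIntegral.norm_integral_le_of_norm_le_const hb
    rw [Rcont]
    refine le_trans (le_abs_self _) ?_
    rw [← Real.norm_eq_abs]
    calc ‖∫ t in (0:ℝ)..T, ∑ k, ∑ i, x' t k * A k i * contPlay η A (fun _ => 0) x' t i‖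
        ≤ C * |T - 0| := this
      _ = C * T := by rw [sub_zero, abs_of_pos hT]
  have hmem : Rcont η A (fun _ => 0) T X ∈ {r | ∃ x' : ℝ → Fin n → ℝ, Measurable x' ∧
      (∀ t ∈ Set.Icc (0:ℝ) T, x' t ∈ stdSimplex ℝ (Fin n)) ∧
      r = Rcont η A (fun _ => 0) T x'} :=
    ⟨X, measurable_const, fun t _ => hx, rfl⟩
  calc Real.log m / η + T * c j - (1/η) * Real.log Q
      = Rcont η A (fun _ => 0) T X := hval.symm
    _ ≤ RcontStar η A (fun _ => 0) T := le_csSup hbdd hmem
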